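/- For |z₁|, |z₂| < 1 and integers k₁,…,k_i ≥ 1, l₁,…,l_j ≥ 1, the product of one-variable multiple polylogarithms satisfies the stuffle expansion Li_{k₁,…,k_i}(z₁)·Li_{l₁,…,l_j}(z₂) = ∑_{𝐤} c_𝐤 · Li_𝐤, where the sum runs over the terms 𝐤 of the harmonic product (k₁,…,k_i)*(l₁,…,l_j) with multiplicities c_𝐤, and each Li_𝐤 is the corresponding 2-variable multiple polylogarithm: its summation variables n₁ > ⋯ > n_{|𝐤|} > 0 weight z₁ at the position of the block coming from the k-index and z₂ at the position coming from the l-index (z₁z₂ on merged entries). -/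

import Mathlib

namespace StuffleStmt

/-- A colored index letter: an exponent `k ∈ ℕ+` together with the variable weight
(`z₁`, `z₂`, `z₁z₂` on merged entries, or `1` for unweighted positions). -/
abbrev C := ℕ+ × ℂ

/-- The colored harmonic (quasi-shuffle) product: on merged entries the exponents
add and the variable weights multiply (`z₁` and `z₂` merge to `z₁z₂`). -/
noncomputable def hp2 : List C → List C → (List C →₀ ℂ)
  | [], w => Finsupp.single w 1
  | (a :: u), [] => Finsupp.single (a :: u) 1
  | (a :: u), (b :: v) =>
      Finsupp.mapDomain (a :: ·) (hp2 u (b :: v)) +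
      Finsupp.mapDomain (b :: ·) (hp2 (a :: u) v) +
      Finsupp.mapDomain ((((a.1 + b.1 : ℕ+), a.2 * b.2) : C) :: ·) (hp2 u v)
termination_by u v => u.length + v.length

/-- The multiple polylogarithm series attached to a colored index
`c = ((k₁,x₁),…,(k_r,x_r))`:
`∑_{n₁>⋯>n_r>0} ∏_t x_t^{n_t} / n_t^{k_t}`.
For `c = colorize z₁ ks` this is `Li_{ks}(z₁)`, and for the terms `𝐤` of the colored
harmonic product it is the corresponding two-variable multiple polylogarithm
(`z₁` weighting the position of the block coming from the `k`-index, `z₂` that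
coming from the `l`-index, and `z₁z₂` merged entries). -/
noncomputable def GLi (c : List C) : ℂ :=
  ∑' n : {n : Fin c.length → ℕ // StrictAnti n ∧ ∀ t, 0 < n t},
    ∏ t : Fin c.length, ((c.get t).2 ^ (n.1 t) / ((n.1 t : ℂ)) ^ ((c.get t).1 : ℕ))

/-- Color an index `(k₁,…,k_i)` with main variable `z`: the first entry carries the
weight `z` (giving the factor `z^{n₁}`) and the remaining entries carry weight `1`. -/
noncomputable def colorize (z : ℂ) : List ℕ+ → List C
  | [] => []
  | (k :: ks) => (k, z) :: ks.map (fun k' => ((k', 1) : C))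

/-! ### Auxiliary material: truncated multiple polylogarithms -/

/-- Truncated multiple polylog: sum over `N > n₁ > ⋯ > n_r > 0`. -/
noncomputable def T : List C → ℕ → ℂ
  | [], _ => 1
  | (a :: c), N => ∑ n ∈ Finset.Ico 1 N, a.2 ^ n / (n : ℂ) ^ (a.1 : ℕ) * T c n

lemma T_nil (N : ℕ) : T [] N = 1 := rfl

lemma T_cons (a : C) (c : List C) (N : ℕ) :
    T (a :: c) N = ∑ n ∈ Finset.Ico 1 N, a.2 ^ n / (n : ℂ) ^ (a.1 : ℕ) * T c n := rfl

lemma sum_mul_sum_split (f g : ℕ → ℂ) (N : ℕ) :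
    (∑ m ∈ Finset.Ico 1 N, f m) * (∑ n ∈ Finset.Ico 1 N, g n) =
      (∑ m ∈ Finset.Ico 1 N, f m * ∑ n ∈ Finset.Ico 1 m, g n) +
      (∑ n ∈ Finset.Ico 1 N, (∑ m ∈ Finset.Ico 1 n, f m) * g n) +
      (∑ m ∈ Finset.Ico 1 N, f m * g m) := by
  induction N with
  | zero => simp
  | succ N ih =>
    rcases Nat.eq_zero_or_pos N with h | h
    · subst h; simp
    rw [Finset.sum_Ico_succ_top h, Finset.sum_Ico_succ_top h, Finset.sum_Ico_succ_top h,
        Finset.sum_Ico_succ_top h, Finset.sum_Ico_succ_top h]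
    linear_combination ih

lemma mapDomain_sum_T (f : List C → List C) (s : List C →₀ ℂ) (N : ℕ) :
    (Finsupp.mapDomain f s).sum (fun w c => c * T w N) =
      s.sum (fun w c => c * T (f w) N) :=
  Finsupp.sum_mapDomain_index (fun _ => zero_mul _) (fun _ _ _ => add_mul _ _ _)

lemma interchange (f : ℕ → ℂ) (s : List C →₀ ℂ) (N : ℕ) :
    (∑ m ∈ Finset.Ico 1 N, f m * s.sum (fun w c => c * T w m)) =
      s.sum (fun w c => c * ∑ m ∈ Finset.Ico 1 N, f m * T w m) := by
  simp only [Finsupp.sum, Finset.mul_sum]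
  rw [Finset.sum_comm]
  exact Finset.sum_congr rfl fun w _ => by
    exact Finset.sum_congr rfl fun m _ => by ring

/-- The finite (truncated) stuffle identity. -/
lemma T_stuffle : ∀ (u v : List C) (N : ℕ),
    T u N * T v N = (hp2 u v).sum fun w c => c * T w N
  | [], v, N => by
    rw [hp2, Finsupp.sum_single_index (h := fun w c => c * T w N) (zero_mul _), one_mul,
      T_nil, one_mul]
  | (a :: u), [], N => by
    rw [hp2, Finsupp.sum_single_index (h := fun w c => c * T w N) (zero_mul _), one_mul,
      T_nil, mul_one]
  | (a :: u), (b :: v), N => by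
    rw [hp2,
        Finsupp.sum_add_index' (h := fun w c => c * T w N) (fun _ => zero_mul _)
          (fun _ _ _ => add_mul _ _ _),
        Finsupp.sum_add_index' (h := fun w c => c * T w N) (fun _ => zero_mul _)
          (fun _ _ _ => add_mul _ _ _),
        mapDomain_sum_T, mapDomain_sum_T, mapDomain_sum_T]
    rw [T_cons a u N, T_cons b v N, sum_mul_sum_split]
    congr 1
    · congr 1
      · -- m > n piece
        calc ∑ m ∈ Finset.Ico 1 N, a.2 ^ m / (m : ℂ) ^ (a.1 : ℕ) * T u m *
                ∑ n ∈ Finset.Ico 1 m, b.2 ^ n / (n : ℂ) ^ (b.1 : ℕ) * T v n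
            = ∑ m ∈ Finset.Ico 1 N, a.2 ^ m / (m : ℂ) ^ (a.1 : ℕ) *
                ((hp2 u (b :: v)).sum fun w c => c * T w m) := by
              refine Finset.sum_congr rfl fun m _ => ?_
              rw [← T_cons b v m, mul_assoc, T_stuffle u (b :: v) m]
          _ = (hp2 u (b :: v)).sum fun w c => c * T (a :: w) N := by
              rw [interchange]
              exact Finsupp.sum_congr fun w _ => by rw [← T_cons a w N]
      · -- n > m piece
        calc ∑ n ∈ Finset.Ico 1 N,
                (∑ m ∈ Finset.Ico 1 n, a.2 ^ m / (m : ℂ) ^ (a.1 : ℕ) * T u m) *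
                (b.2 ^ n / (n : ℂ) ^ (b.1 : ℕ) * T v n)
            = ∑ n ∈ Finset.Ico 1 N, b.2 ^ n / (n : ℂ) ^ (b.1 : ℕ) *
                ((hp2 (a :: u) v).sum fun w c => c * T w n) := by
              refine Finset.sum_congr rfl fun n _ => ?_
              rw [← T_cons a u n, ← T_stuffle (a :: u) v n]; ring
          _ = (hp2 (a :: u) v).sum fun w c => c * T (b :: w) N := by
              rw [interchange]
              exact Finsupp.sum_congr fun w _ => by rw [← T_cons b w N]
    · -- diagonal piece
      calc ∑ m ∈ Finset.Ico 1 N, a.2 ^ m / (m : ℂ) ^ (a.1 : ℕ) * T u m *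
              (b.2 ^ m / (m : ℂ) ^ (b.1 : ℕ) * T v m)
          = ∑ m ∈ Finset.Ico 1 N, (a.2 * b.2) ^ m / (m : ℂ) ^ ((a.1 + b.1 : ℕ+) : ℕ) *
              ((hp2 u v).sum fun w c => c * T w m) := by
            refine Finset.sum_congr rfl fun m _ => ?_
            rw [← T_stuffle u v m, PNat.add_coe, mul_pow, pow_add]
            ring
        _ = (hp2 u v).sum fun w c => c * T ((a.1 + b.1, a.2 * b.2) :: w) N := by
            rw [interchange]
            exact Finsupp.sum_congr fun w _ => by rw [← T_cons ((a.1 + b.1, a.2 * b.2)) w N]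
termination_by u v _ => u.length + v.length

/-! ### Chains -/

/-- the summand of `GLi`. -/
noncomputable def termC (c : List C) (n : Fin c.length → ℕ) : ℂ :=
  ∏ t : Fin c.length, ((c.get t).2 ^ (n t) / ((n t : ℂ)) ^ ((c.get t).1 : ℕ))

abbrev ChainP {r : ℕ} (n : Fin r → ℕ) : Prop := StrictAnti n ∧ ∀ t, 0 < n t

abbrev Chain (r : ℕ) := {n : Fin r → ℕ // ChainP n}

lemma GLi_eq (c : List C) : GLi c = ∑' i : Chain c.length, termC c i.1 := rfl

open Classical in
noncomputable def chainsN (r N : ℕ) : Finset (Fin r → ℕ) :=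
  (Fintype.piFinset fun _ => Finset.range N).filter (fun n => ChainP n)

open Classical in
lemma mem_chainsN {r N : ℕ} {n : Fin r → ℕ} :
    n ∈ chainsN r N ↔ (∀ t, n t < N) ∧ ChainP n := by
  simp [chainsN, Fintype.mem_piFinset]

lemma strictAnti_cons {r : ℕ} {x : ℕ} {g : Fin r → ℕ} (hg : StrictAnti g)
    (hx : ∀ t, g t < x) : StrictAnti (Fin.cons x g : Fin (r + 1) → ℕ) := by
  intro i j hij
  induction j using Fin.cases with
  | zero => exact absurd hij (Fin.not_lt_zero i).elim
  | succ t =>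
    induction i using Fin.cases with
    | zero => simpa using hx t
    | succ s =>
      simp only [Fin.cons_succ]
      exact hg (by exact_mod_cast (Fin.succ_lt_succ_iff.mp hij))

lemma strictAnti_tail {r : ℕ} {n : Fin (r + 1) → ℕ} (hn : StrictAnti n) :
    StrictAnti (Fin.tail n) := fun s t h => hn (Fin.succ_lt_succ_iff.mpr h)

lemma termC_cons (a : C) (c : List C) (n : Fin (c.length + 1) → ℕ) :
    termC (a :: c) n = a.2 ^ (n 0) / ((n 0 : ℂ)) ^ (a.1 : ℕ) * termC c (Fin.tail n) := by
  have h := Fin.prod_univ_succ (f := fun t : Fin (c.length + 1) =>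
      ((a :: c).get t).2 ^ n t / ((n t : ℂ)) ^ (((a :: c).get t).1 : ℕ))
  exact h.trans (by congr 1)

lemma sum_chainsN : ∀ (c : List C) (N : ℕ),
    (∑ n ∈ chainsN c.length N, termC c n) = T c N
  | [], N => by
    show (∑ n ∈ chainsN 0 N, termC [] n) = T [] N
    have h0 : (fun t => (t : Fin 0).elim0 : Fin 0 → ℕ) ∈ chainsN 0 N := by
      rw [mem_chainsN]
      exact ⟨fun t => t.elim0, fun i j h => i.elim0, fun t => t.elim0⟩
    have : chainsN 0 N = {(fun t => (t : Fin 0).elim0 : Fin 0 → ℕ)} := by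
      apply Finset.eq_singleton_iff_unique_mem.mpr
      exact ⟨h0, fun x _ => funext fun t => t.elim0⟩
    rw [this, Finset.sum_singleton]
    simp [termC, T]
  | (a :: c), N => by
    have base : ∀ m, (∑ n ∈ chainsN c.length m, termC c n) = T c m := fun m => sum_chainsN c m
    rw [T_cons]
    calc (∑ n ∈ chainsN (c.length + 1) N, termC (a :: c) n)
        = ∑ p ∈ (Finset.Ico 1 N).sigma (fun m => chainsN c.length m),
            a.2 ^ p.1 / (p.1 : ℂ) ^ (a.1 : ℕ) * termC c p.2 := by
          refine (Finset.sum_nbij' (fun n => (⟨n 0, Fin.tail n⟩ : Σ _ : ℕ, (Fin c.length → ℕ)))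
            (fun p => Fin.cons p.1 p.2) ?_ ?_ ?_ ?_ ?_)
          · intro n hn
            rw [mem_chainsN] at hn
            obtain ⟨hlt, hanti, hpos⟩ := hn
            refine Finset.mem_sigma.mpr ⟨Finset.mem_Ico.mpr ⟨hpos 0, hlt 0⟩, ?_⟩
            rw [mem_chainsN]
            exact ⟨fun t => hanti (Fin.succ_pos t), strictAnti_tail hanti,
              fun t => hpos t.succ⟩
          · intro p hp
            obtain ⟨h1, h2⟩ := Finset.mem_sigma.mp hp
            rw [Finset.mem_Ico] at h1
            rw [mem_chainsN] at h2 ⊢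
            obtain ⟨hlt, hanti, hpos⟩ := h2
            refine ⟨?_, strictAnti_cons hanti hlt, ?_⟩
            · intro t
              induction t using Fin.cases with
              | zero => simpa using h1.2
              | succ s => simp only [Fin.cons_succ]; exact (hlt s).trans h1.2
            · intro t
              induction t using Fin.cases with
              | zero => simpa [Nat.pos_iff_ne_zero, Nat.one_le_iff_ne_zero] using h1.1
              | succ s => simp only [Fin.cons_succ]; exact hpos s
          · intro n _; exact Fin.cons_self_tail n
          · intro p _; ext1
            · simp
            · simp [Fin.tail_cons]
          · intro n _
            exact termC_cons a c n
      _ = ∑ m ∈ Finset.Ico 1 N, a.2 ^ m / (m : ℂ) ^ (a.1 : ℕ) * T c m := by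
          rw [Finset.sum_sigma]
          exact Finset.sum_congr rfl fun m _ => by dsimp only; rw [← Finset.mul_sum, base]

open Classical in
noncomputable def chainsS (r N : ℕ) : Finset (Chain r) :=
  (Fintype.piFinset fun _ : Fin r => Finset.range N).subtype (fun n => ChainP n)

open Classical in
lemma mem_chainsS {r N : ℕ} {i : Chain r} :
    i ∈ chainsS r N ↔ ∀ t, i.1 t < N := by
  simp [chainsS, Finset.mem_subtype, Fintype.mem_piFinset]

lemma sum_chainsS (c : List C) (N : ℕ) :
    (∑ i ∈ chainsS c.length N, termC c i.1) = T c N := by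
  rw [← sum_chainsN c N]
  refine (Finset.sum_bij (fun (n : Fin c.length → ℕ) (hn : n ∈ chainsN c.length N) =>
    (⟨n, (mem_chainsN.mp hn).2⟩ : Chain c.length)) ?_ ?_ ?_ ?_).symm
  · intro n hn
    rw [mem_chainsS]
    exact (mem_chainsN.mp hn).1
  · intro n₁ h₁ n₂ h₂ h
    exact congrArg Subtype.val h
  · intro b hb
    refine ⟨b.1, mem_chainsN.mpr ⟨mem_chainsS.mp hb, b.2⟩, rfl⟩
  · intro n hn; rfl

lemma tendsto_T (c : List C)
    (h : Summable (fun i : Chain c.length => termC c i.1)) :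
    Filter.Tendsto (T c) Filter.atTop (nhds (GLi c)) := by
  have hs : HasSum (fun i : Chain c.length => termC c i.1) (GLi c) := h.hasSum
  have hmono : Monotone (chainsS c.length) := by
    intro M N hMN
    intro i hi
    rw [mem_chainsS] at hi ⊢
    exact fun t => (hi t).trans_le hMN
  have hexh : ∀ i : Chain c.length, ∃ N, i ∈ chainsS c.length N := by
    intro i
    refine ⟨(∑ t, i.1 t) + 1, ?_⟩
    rw [mem_chainsS]
    intro t
    have : i.1 t ≤ ∑ t, i.1 t := Finset.single_le_sum (f := fun t => i.1 t)
      (fun _ _ => Nat.zero_le _) (Finset.mem_univ t)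
    omega
  have key := (Filter.Tendsto.comp hs
    (Filter.tendsto_atTop_finset_of_monotone hmono hexh))
  have e : ((fun s : Finset (Chain c.length) => ∑ i ∈ s, termC c i.1) ∘ chainsS c.length)
      = T c := funext fun N => sum_chainsS c N
  rwa [e] at key

/-! ### Summability -/

lemma pi_geom_summable (r : ℕ) {q : ℝ} (h0 : 0 ≤ q) (h1 : q < 1) :
    Summable (fun n : Fin r → ℕ => ∏ t, q ^ (n t)) := by
  induction r with
  | zero => exact Summable.of_finite
  | succ r IH =>
    have hg := summable_geometric_of_lt_one h0 h1
    have hp : Summable (fun p : ℕ × (Fin r → ℕ) => q ^ p.1 * ∏ t, q ^ (p.2 t)) :=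
      by apply Summable.mul_of_nonneg hg IH <;> intro n <;> positivity
    refine (Equiv.summable_iff (Fin.consEquiv (fun _ : Fin (r + 1) => ℕ))).mp ?_
    refine hp.congr fun p => ?_
    show q ^ p.1 * ∏ t, q ^ (p.2 t) = ∏ t : Fin (r + 1), q ^ ((Fin.cons p.1 p.2 : Fin (r+1) → ℕ) t)
    rw [Fin.prod_univ_succ]
    simp [Fin.cons_succ]

lemma norm_term_le (a : C) (c : List C) (hle : ∀ x ∈ (a :: c), ‖x.2‖ ≤ 1)
    (n : Fin (c.length + 1) → ℕ) (hpos : ∀ t, 0 < n t) :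
    ‖termC (a :: c) n‖ ≤ ‖a.2‖ ^ (n 0) := by
  rw [termC_cons, norm_mul, norm_div, norm_pow, norm_pow, Complex.norm_natCast]
  have h1 : ‖a.2‖ ^ n 0 / (n 0 : ℝ) ^ (a.1 : ℕ) ≤ ‖a.2‖ ^ n 0 := by
    apply div_le_self (pow_nonneg (norm_nonneg _) _)
    exact one_le_pow₀ (by exact_mod_cast hpos 0)
  have h2 : ‖termC c (Fin.tail n)‖ ≤ 1 := by
    rw [termC, norm_prod]
    apply Finset.prod_le_one (fun t _ => norm_nonneg _)
    intro t _
    rw [norm_div, norm_pow, norm_pow, Complex.norm_natCast]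
    have hden : (1 : ℝ) ≤ (Fin.tail n t : ℝ) ^ ((c.get t).1 : ℕ) :=
      one_le_pow₀ (by exact_mod_cast hpos t.succ)
    apply div_le_one_of_le₀ ?_ (by positivity)
    calc ‖(c.get t).2‖ ^ (Fin.tail n t) ≤ 1 ^ (Fin.tail n t) :=
          pow_le_pow_left₀ (norm_nonneg _) (hle _ (List.mem_cons_of_mem a (List.get_mem c t))) _
      _ = 1 := one_pow _
      _ ≤ _ := hden
  calc ‖a.2‖ ^ n 0 / (n 0 : ℝ) ^ (a.1 : ℕ) * ‖termC c (Fin.tail n)‖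
      ≤ ‖a.2‖ ^ n 0 / (n 0 : ℝ) ^ (a.1 : ℕ) * 1 := by
        apply mul_le_mul_of_nonneg_left h2 (by positivity)
    _ = ‖a.2‖ ^ n 0 / (n 0 : ℝ) ^ (a.1 : ℕ) := mul_one _
    _ ≤ ‖a.2‖ ^ n 0 := h1

lemma summable_term : ∀ (c : List C), (∀ x ∈ c, ‖x.2‖ ≤ 1) →
    (∀ x ∈ c.head?, ‖x.2‖ < 1) →
    Summable (fun i : Chain c.length => termC c i.1)
  | [], _, _ => Summable.of_finite (f := fun i : Chain 0 => termC [] i.1)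
  | (a :: c), hle, hlt => by
    show Summable (fun i : Chain (c.length + 1) => termC (a :: c) i.1)
    have hq1 : ‖a.2‖ < 1 := hlt a rfl
    have hq0 : (0 : ℝ) ≤ ‖a.2‖ := norm_nonneg _
    rcases eq_or_lt_of_le hq0 with h0 | h0
    · -- a.2 = 0 : all terms vanish
      have ha : a.2 = 0 := by rw [← norm_eq_zero]; exact h0.symm
      have hz : ∀ i : Chain (c.length + 1), termC (a :: c) i.1 = 0 := by
        intro i
        rw [termC_cons, ha, zero_pow (i.2.2 0).ne', zero_div, zero_mul]
      exact summable_zero.congr fun i => (hz i).symm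
    · set r := c.length with hr
      set q : ℝ := ‖a.2‖ with hq
      set q' : ℝ := q ^ (1 / ((r : ℝ) + 1)) with hq'
      have hexp : (0 : ℝ) < 1 / ((r : ℝ) + 1) := by positivity
      have hq'0 : 0 ≤ q' := Real.rpow_nonneg hq0 _
      have hq'1 : q' < 1 := Real.rpow_lt_one hq0 hq1 hexp
      have hg : Summable (fun n : Fin (r + 1) → ℕ => ∏ t, q' ^ (n t)) :=
        pi_geom_summable (r + 1) hq'0 hq'1
      have hsub : Summable (fun i : Chain (r + 1) => ∏ t, q' ^ (i.1 t)) :=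
        hg.subtype (setOf ChainP)
      refine Summable.of_norm (Summable.of_nonneg_of_le (fun i => norm_nonneg _) ?_ hsub)
      intro i
      refine (norm_term_le a c hle i.1 i.2.2).trans ?_
      rw [Finset.prod_pow_eq_pow_sum]
      have hsum : (∑ t, i.1 t) ≤ (r + 1) * i.1 0 := by
        calc ∑ t, i.1 t ≤ ∑ _t : Fin (r + 1), i.1 0 :=
              Finset.sum_le_sum fun t _ => i.2.1.antitone (Fin.zero_le t)
          _ = (r + 1) * i.1 0 := by
              rw [Finset.sum_const, Finset.card_univ, Fintype.card_fin, smul_eq_mul]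
      have e1 : q' ^ (∑ t, i.1 t) = q ^ ((1 / ((r : ℝ) + 1)) * (∑ t, i.1 t : ℕ)) := by
        rw [← Real.rpow_natCast q' (∑ t, i.1 t), hq', ← Real.rpow_mul hq0]
      rw [e1, ← Real.rpow_natCast q (i.1 0)]
      apply Real.rpow_le_rpow_of_exponent_ge h0 hq1.le
      rw [div_mul_eq_mul_div, one_mul, div_le_iff₀ (by positivity)]
      calc ((∑ t, i.1 t : ℕ) : ℝ) ≤ (((r + 1) * i.1 0 : ℕ) : ℝ) := by exact_mod_cast hsum
        _ = (i.1 0 : ℝ) * ((r : ℝ) + 1) := by push_cast; ring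

/-! ### Admissibility of supports of `hp2` -/

lemma hp2_letters : ∀ (u v : List C),
    (∀ x ∈ u, ‖x.2‖ ≤ 1) → (∀ x ∈ v, ‖x.2‖ ≤ 1) →
    ∀ w ∈ (hp2 u v).support, ∀ x ∈ w, ‖x.2‖ ≤ 1
  | [], v, _, hv => by
    intro w hw
    rw [hp2] at hw
    have := Finset.mem_singleton.mp (Finsupp.support_single_subset hw)
    subst this; exact hv
  | (a :: u), [], hu, _ => by
    intro w hw
    rw [hp2] at hw
    have := Finset.mem_singleton.mp (Finsupp.support_single_subset hw)
    subst this; exact hu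
  | (a :: u), (b :: v), hu, hv => by
    intro w hw
    rw [hp2] at hw
    have hu' : ∀ x ∈ u, ‖x.2‖ ≤ 1 := fun x hx => hu x (List.mem_cons_of_mem a hx)
    have hv' : ∀ x ∈ v, ‖x.2‖ ≤ 1 := fun x hx => hv x (List.mem_cons_of_mem b hx)
    rcases Finset.mem_union.mp (Finsupp.support_add hw) with hw' | hw'
    · rcases Finset.mem_union.mp (Finsupp.support_add hw') with hw'' | hw''
      · obtain ⟨w', hwm, rfl⟩ := Finset.mem_image.mp (Finsupp.mapDomain_support hw'')
        intro x hx
        rcases List.mem_cons.mp hx with rfl | hx'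
        · exact hu _ (List.mem_cons_self)
        · exact hp2_letters u (b :: v) hu' hv w' hwm x hx'
      · obtain ⟨w', hwm, rfl⟩ := Finset.mem_image.mp (Finsupp.mapDomain_support hw'')
        intro x hx
        rcases List.mem_cons.mp hx with rfl | hx'
        · exact hv _ (List.mem_cons_self)
        · exact hp2_letters (a :: u) v hu hv' w' hwm x hx'
    · obtain ⟨w', hwm, rfl⟩ := Finset.mem_image.mp (Finsupp.mapDomain_support hw')
      intro x hx
      rcases List.mem_cons.mp hx with rfl | hx'
      · rw [norm_mul]
        exact mul_le_one₀ (hu a (List.mem_cons_self)) (norm_nonneg _)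
          (hv b (List.mem_cons_self))
      · exact hp2_letters u v hu' hv' w' hwm x hx'
termination_by u v => u.length + v.length

lemma hp2_head : ∀ (u v : List C),
    (∀ x ∈ u, ‖x.2‖ ≤ 1) → (∀ x ∈ v, ‖x.2‖ ≤ 1) →
    (∀ x ∈ u.head?, ‖x.2‖ < 1) → (∀ x ∈ v.head?, ‖x.2‖ < 1) →
    ∀ w ∈ (hp2 u v).support, ∀ x ∈ w.head?, ‖x.2‖ < 1
  | [], v, _, _, _, hv2 => by
    intro w hw
    rw [hp2] at hw
    have := Finset.mem_singleton.mp (Finsupp.support_single_subset hw)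
    subst this; exact hv2
  | (a :: u), [], _, _, hu2, _ => by
    intro w hw
    rw [hp2] at hw
    have := Finset.mem_singleton.mp (Finsupp.support_single_subset hw)
    subst this; exact hu2
  | (a :: u), (b :: v), hu, hv, hu2, hv2 => by
    intro w hw
    rw [hp2] at hw
    rcases Finset.mem_union.mp (Finsupp.support_add hw) with hw' | hw'
    · rcases Finset.mem_union.mp (Finsupp.support_add hw') with hw'' | hw''
      · obtain ⟨w', _, rfl⟩ := Finset.mem_image.mp (Finsupp.mapDomain_support hw'')
        intro x hx
        obtain rfl : a = x := by simpa using hx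
        exact hu2 a rfl
      · obtain ⟨w', _, rfl⟩ := Finset.mem_image.mp (Finsupp.mapDomain_support hw'')
        intro x hx
        obtain rfl : b = x := by simpa using hx
        exact hv2 b rfl
    · obtain ⟨w', _, rfl⟩ := Finset.mem_image.mp (Finsupp.mapDomain_support hw')
      intro x hx
      obtain rfl : (a.1 + b.1, a.2 * b.2) = x := by simpa using hx
      show ‖a.2 * b.2‖ < 1
      rw [norm_mul]
      calc ‖a.2‖ * ‖b.2‖ ≤ ‖a.2‖ * 1 :=
            mul_le_mul_of_nonneg_left (hv b (List.mem_cons_self)) (norm_nonneg _)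
        _ = ‖a.2‖ := mul_one _
        _ < 1 := hu2 a rfl

lemma colorize_letters (z : ℂ) (hz : ‖z‖ < 1) (ks : List ℕ+) :
    ∀ x ∈ colorize z ks, ‖x.2‖ ≤ 1 := by
  cases ks with
  | nil => simp [colorize]
  | cons k ks =>
    intro x hx
    rw [colorize] at hx
    rcases List.mem_cons.mp hx with rfl | hx'
    · exact hz.le
    · obtain ⟨k', _, rfl⟩ := List.mem_map.mp hx'
      simp

lemma colorize_head (z : ℂ) (hz : ‖z‖ < 1) (ks : List ℕ+) :
    ∀ x ∈ (colorize z ks).head?, ‖x.2‖ < 1 := by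
  cases ks with
  | nil => simp [colorize]
  | cons k ks =>
    intro x hx
    obtain rfl : (k, z) = x := by simpa [colorize] using hx
    exact hz

/-- the stuffle (harmonic product) expansion
`Li_{k₁,…,k_i}(z₁)·Li_{l₁,…,l_j}(z₂) = ∑_𝐤 c_𝐤 Li_𝐤`, the sum running over the terms
of the harmonic product `(k₁,…,k_i)*(l₁,…,l_j)` with multiplicities, each term being
the corresponding two-variable multiple polylogarithm. -/
theorem MPL_stuffle (z₁ z₂ : ℂ) (hz₁ : ‖z₁‖ < 1) (hz₂ : ‖z₂‖ < 1) (ks ls : List ℕ+) :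
    GLi (colorize z₁ ks) * GLi (colorize z₂ ls) =
      (hp2 (colorize z₁ ks) (colorize z₂ ls)).sum (fun w c => c * GLi w) := by
  set u := colorize z₁ ks with hu
  set v := colorize z₂ ls with hv
  have hu1 : ∀ x ∈ u, ‖x.2‖ ≤ 1 := colorize_letters z₁ hz₁ ks
  have hv1 : ∀ x ∈ v, ‖x.2‖ ≤ 1 := colorize_letters z₂ hz₂ ls
  have hu2 : ∀ x ∈ u.head?, ‖x.2‖ < 1 := colorize_head z₁ hz₁ ks
  have hv2 : ∀ x ∈ v.head?, ‖x.2‖ < 1 := colorize_head z₂ hz₂ ls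
  have tU := tendsto_T u (summable_term u hu1 hu2)
  have tV := tendsto_T v (summable_term v hv1 hv2)
  have tprod := tU.mul tV
  have tRHS : Filter.Tendsto (fun N => (hp2 u v).sum fun w c => c * T w N)
      Filter.atTop (nhds ((hp2 u v).sum fun w c => c * GLi w)) := by
    simp only [Finsupp.sum]
    apply tendsto_finset_sum
    intro w hw
    have h1 := hp2_letters u v hu1 hv1 w hw
    have h2 := hp2_head u v hu1 hv1 hu2 hv2 w hw
    exact (tendsto_T w (summable_term w h1 h2)).const_mul _
  have tLHS : Filter.Tendsto (fun N => (hp2 u v).sum fun w c => c * T w N)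
      Filter.atTop (nhds (GLi u * GLi v)) := by
    refine tprod.congr fun N => ?_
    exact T_stuffle u v N
  exact tendsto_nhds_unique tLHS tRHS

end StuffleStmt
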